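/- Let F be a field of characteristic zero and let λ1, λ2, λ3 ∈ F \ {0,1} be pairwise distinct. Suppose u, X, Y ∈ F satisfy Y² = X·(X + (λ1−λ3)(λ2−1)u(u−λ2)(u−λ1λ3))·(X + (λ1−λ2)(λ3−1)u(u−λ3)(u−λ1λ2)) and the element D := X − λ1(λ2−1)(λ3−1)u(u−λ2)(u−λ3) is nonzero. Define N = (λ1−1)(λ2−1)(λ3−1)u(u−λ1)(u−λ2)(u−λ3), z2 = N/D + u + 1, z3 = u, and z̃4 = N·Y/D². Then z̃4² = z3·(1 − z2 + z3)·∏_{i=1}^{3}(λi² − λi z2 + z3). -/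

import Mathlib

lemma frac_stmt11 {F : Type*} [Field F] (n A Y u q1 q2 q3 : F) (hA : A ≠ 0)
    (h : n ^ 2 * Y ^ 2 = -(u * n * (q1 * q2 * q3))) :
    (n * Y / A ^ 2) ^ 2 = u * (-(n / A)) * (q1 / A * (q2 / A) * (q3 / A)) := by
  field_simp
  linear_combination h

set_option maxHeartbeats 1000000 in
lemma aux_stmt11 (F : Type*) [Field F] (l1 l2 l3 u X Y : F)
    (hW : Y ^ 2 = X * (X + (l1 - l3) * (l2 - 1) * u * (u - l2) * (u - l1 * l3)) *
      (X + (l1 - l2) * (l3 - 1) * u * (u - l3) * (u - l1 * l2)))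
    (hD : X - l1 * (l2 - 1) * (l3 - 1) * u * (u - l2) * (u - l3) ≠ 0) :
    ((l1 - 1) * (l2 - 1) * (l3 - 1) * u * (u - l1) * (u - l2) * (u - l3) * Y /
        (X - l1 * (l2 - 1) * (l3 - 1) * u * (u - l2) * (u - l3)) ^ 2) ^ 2 =
      u * (1 - ((l1 - 1) * (l2 - 1) * (l3 - 1) * u * (u - l1) * (u - l2) * (u - l3) /
            (X - l1 * (l2 - 1) * (l3 - 1) * u * (u - l2) * (u - l3)) + u + 1) + u) *
        ((l1 ^ 2 - l1 * ((l1 - 1) * (l2 - 1) * (l3 - 1) * u * (u - l1) * (u - l2) * (u - l3) /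
            (X - l1 * (l2 - 1) * (l3 - 1) * u * (u - l2) * (u - l3)) + u + 1) + u) *
         (l2 ^ 2 - l2 * ((l1 - 1) * (l2 - 1) * (l3 - 1) * u * (u - l1) * (u - l2) * (u - l3) /
            (X - l1 * (l2 - 1) * (l3 - 1) * u * (u - l2) * (u - l3)) + u + 1) + u) *
         (l3 ^ 2 - l3 * ((l1 - 1) * (l2 - 1) * (l3 - 1) * u * (u - l1) * (u - l2) * (u - l3) /
            (X - l1 * (l2 - 1) * (l3 - 1) * u * (u - l2) * (u - l3)) + u + 1) + u)) := by
  set A := X - l1 * (l2 - 1) * (l3 - 1) * u * (u - l2) * (u - l3) with hA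
  set n := (l1 - 1) * (l2 - 1) * (l3 - 1) * u * (u - l1) * (u - l2) * (u - l3) with hn
  set a := (l1 - l3) * (l2 - 1) * u * (u - l2) * (u - l1 * l3) with ha
  set b := (l1 - l2) * (l3 - 1) * u * (u - l3) * (u - l1 * l2) with hb
  set c1 := (l1 - 1) * (l1 - u) with hc1
  set c2 := (l2 - 1) * (l2 - u) with hc2
  set c3 := (l3 - 1) * (l3 - u) with hc3
  have e0 : 1 - (n / A + u + 1) + u = -(n / A) := by ring
  have e1 : l1 ^ 2 - l1 * (n / A + u + 1) + u = (c1 * A - l1 * n) / A := by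
    rw [hc1]; field_simp; ring
  have e2 : l2 ^ 2 - l2 * (n / A + u + 1) + u = (c2 * A - l2 * n) / A := by
    rw [hc2]; field_simp; ring
  have e3 : l3 ^ 2 - l3 * (n / A + u + 1) + u = (c3 * A - l3 * n) / A := by
    rw [hc3]; field_simp; ring
  have f1 : c1 * A - l1 * n = c1 * X := by rw [hc1, hA, hn]; ring
  have f2 : c2 * A - l2 * n = c2 * (X + b) := by rw [hc2, hA, hn, hb]; ring
  have f3 : c3 * A - l3 * n = c3 * (X + a) := by rw [hc3, hA, hn, ha]; ring
  have fn : u * c1 * c2 * c3 = -n := by rw [hc1, hc2, hc3, hn]; ring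
  clear_value A n a b c1 c2 c3
  rw [e0, e1, e2, e3, f1, f2, f3]
  refine frac_stmt11 _ _ _ _ _ _ _ hD ?_
  linear_combination n ^ 2 * hW + n * (X * (X + a) * (X + b)) * fn

/-- the birational equivalence from the Weierstrass model of Kumar's
fibration (1) on `Kum(Jac C)` back to the Shioda sextic
`z̃₄² = z₃(1−z₂+z₃)·∏ᵢ(λᵢ²−λᵢz₂+z₃)` (affine chart `z₁ = 1`). -/
theorem stmt_11 (F : Type*) [Field F] [CharZero F] (l1 l2 l3 : F)
    (h1 : l1 ≠ 0) (h1' : l1 ≠ 1) (h2 : l2 ≠ 0) (h2' : l2 ≠ 1)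
    (h3 : l3 ≠ 0) (h3' : l3 ≠ 1)
    (h12 : l1 ≠ l2) (h13 : l1 ≠ l3) (h23 : l2 ≠ l3)
    (u X Y : F)
    (hW : Y ^ 2 = X * (X + (l1 - l3) * (l2 - 1) * u * (u - l2) * (u - l1 * l3)) *
      (X + (l1 - l2) * (l3 - 1) * u * (u - l3) * (u - l1 * l2)))
    (hD : X - l1 * (l2 - 1) * (l3 - 1) * u * (u - l2) * (u - l3) ≠ 0) :
    let D := X - l1 * (l2 - 1) * (l3 - 1) * u * (u - l2) * (u - l3)
    let N := (l1 - 1) * (l2 - 1) * (l3 - 1) * u * (u - l1) * (u - l2) * (u - l3)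
    let z2 := N / D + u + 1
    let z3 := u
    let z4 := N * Y / D ^ 2
    z4 ^ 2 = z3 * (1 - z2 + z3) *
      ((l1 ^ 2 - l1 * z2 + z3) * (l2 ^ 2 - l2 * z2 + z3) * (l3 ^ 2 - l3 * z2 + z3)) := by
  exact aux_stmt11 F l1 l2 l3 u X Y hW hD
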